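/- (Minimum relative entropy.) Let p be a probability measure on a measurable space X, let f : X → ℝ^k be measurable, and let λ ∈ ℝ^k be such that Z := ∫ exp(−⟨λ, f(x)⟩) dp(x) is finite and positive. Define q* as the probability measure with density exp(−⟨λ, f⟩)/Z with respect to p, and suppose f is q*-integrable with mean f̂ := ∫ f dq*. Then q* minimizes relative entropy subject to the moment constraint: for every probability measure q absolutely continuous with respect to p such that f is q-integrable and ∫ f dq = f̂, one has KL(q*‖p) ≤ KL(q‖p). -/

import Mathlib

open MeasureTheory RealInnerProductSpace ENNReal Classical

/-- Kullback–Leibler divergence `∫ log (dq/dp) dq` of `q` with respect to `p`, with value `∞`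
when the integrand is not `q`-integrable (for probability measures `q ≪ p` the negative part
of `log (dq/dp)` is always `q`-integrable, so non-integrability means `KL = ∞`). -/
noncomputable def KL {X : Type*} [MeasurableSpace X] (q p : Measure X) : ℝ≥0∞ :=
  if Integrable (fun x => Real.log ((q.rnDeriv p x).toReal)) q then
    ENNReal.ofReal (∫ x, Real.log ((q.rnDeriv p x).toReal) ∂q)
  else ⊤

/-- Nonnegativity of relative entropy: if `q ≪ ν` are probability measures and the
log-likelihood ratio is integrable, its integral is nonnegative. -/
lemma aux_integral_llr_nonneg {X : Type*} [MeasurableSpace X] {q ν : Measure X}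
    [IsProbabilityMeasure q] [IsProbabilityMeasure ν] (hqν : q ≪ ν)
    (h_int : Integrable (llr q ν) q) : 0 ≤ ∫ x, llr q ν x ∂q := by
  have h2 : Integrable (fun x => (ν.rnDeriv q x).toReal) q :=
    Measure.integrable_toReal_rnDeriv
  have h1 : ∀ᵐ x ∂q, - llr q ν x ≤ (ν.rnDeriv q x).toReal - 1 := by
    filter_upwards [exp_neg_llr hqν] with x hx
    have h := Real.add_one_le_exp (- llr q ν x)
    rw [hx] at h
    linarith
  have h3 : ∫ x, - llr q ν x ∂q ≤ ∫ x, ((ν.rnDeriv q x).toReal - 1) ∂q :=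
    integral_mono_ae h_int.neg (h2.sub (integrable_const 1)) h1
  have h4 : ∫ x, (ν.rnDeriv q x).toReal ∂q ≤ 1 := by
    have h := Measure.setIntegral_toReal_rnDeriv_le (μ := ν) (ν := q) (s := Set.univ)
      (measure_ne_top ν _)
    simpa using h
  rw [integral_neg] at h3
  rw [integral_sub h2 (integrable_const 1)] at h3
  simp only [integral_const, measure_univ, probReal_univ, ENNReal.toReal_one, mul_one, smul_eq_mul, one_mul] at h3
  linarith

/-- Minimum relative entropy: the exponentially tilted measure `q*` with density
`exp(-⟨λ, f⟩)/Z` with respect to `p` minimizes `KL(q‖p)` among all probability measures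
`q ≪ p` satisfying the moment constraint `∫ f dq = ∫ f dq*`. -/
theorem minimum_relative_entropy
    {X : Type*} [MeasurableSpace X] (p : Measure X) [IsProbabilityMeasure p]
    (k : ℕ) (f : X → EuclideanSpace ℝ (Fin k)) (hf : Measurable f)
    (l : EuclideanSpace ℝ (Fin k))
    (Z : ℝ) (hZ : Z = ∫ x, Real.exp (-⟪l, f x⟫) ∂p)
    (hZint : Integrable (fun x => Real.exp (-⟪l, f x⟫)) p) (hZpos : 0 < Z)
    (qstar : Measure X)
    (hqstar : qstar = p.withDensity (fun x => ENNReal.ofReal (Real.exp (-⟪l, f x⟫) / Z)))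
    (hfqstar : Integrable f qstar)
    (fhat : EuclideanSpace ℝ (Fin k)) (hfhat : fhat = ∫ x, f x ∂qstar) :
    ∀ q : Measure X, IsProbabilityMeasure q → q ≪ p →
      Integrable f q → (∫ x, f x ∂q) = fhat →
      KL qstar p ≤ KL q p := by
  intro q hq hqp hfq hmean
  set g : X → ℝ := fun x => -⟪l, f x⟫ with hg
  have hZint' : Integrable (fun x => Real.exp (g x)) p := hZint
  have hqs_tilted : qstar = p.tilted g := by
    rw [hqstar, Measure.tilted, hZ]
  haveI : IsProbabilityMeasure qstar := by
    rw [hqs_tilted]; exact isProbabilityMeasure_tilted hZint'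
  have hac : qstar ≪ p := hqs_tilted ▸ tilted_absolutelyContinuous p g
  have hpq : p ≪ qstar := hqs_tilted ▸ absolutelyContinuous_tilted hZint'
  -- integrability of g
  have hg_star : Integrable g qstar := (hfqstar.const_inner l).neg
  have hg_q : Integrable g q := (hfq.const_inner l).neg
  -- integrals of g
  have hint_g_star : ∫ x, g x ∂qstar = -⟪l, fhat⟫ := by
    rw [hfhat]
    simp only [hg, integral_neg, integral_inner hfqstar l]
  have hint_g_q : ∫ x, g x ∂q = -⟪l, fhat⟫ := by
    rw [← hmean]
    simp only [hg, integral_neg, integral_inner hfq l]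
  -- llr of qstar w.r.t. p
  have h_llr_star : llr qstar p =ᵐ[qstar] fun x => g x - Real.log Z := by
    have h := log_rnDeriv_tilted_left_self (μ := p) (f := g) hZint'
    rw [← hqs_tilted, ← hZ] at h
    exact hac.ae_le h
  have h_int_star : Integrable (llr qstar p) qstar :=
    (integrable_congr h_llr_star).mpr (hg_star.sub (integrable_const _))
  have h_val_star : ∫ x, llr qstar p x ∂qstar = -⟪l, fhat⟫ - Real.log Z := by
    rw [integral_congr_ae h_llr_star, integral_sub hg_star (integrable_const _),
      hint_g_star]
    simp
  -- case split on integrability for q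
  by_cases h_int_q : Integrable (llr q p) q
  · -- the tilted llr identity for q
    have h_int_qs : Integrable (llr q (p.tilted g)) q :=
      integrable_llr_tilted_right hqp hg_q h_int_q hZint'
    have h_eq : ∫ x, llr q (p.tilted g) x ∂q
        = ∫ x, llr q p x ∂q - ∫ x, g x ∂q + Real.log (∫ x, Real.exp (g x) ∂p) :=
      integral_llr_tilted_right hqp hg_q hZint' h_int_q
    rw [← hqs_tilted, ← hZ, hint_g_q] at h_eq
    rw [← hqs_tilted] at h_int_qs
    have h_nonneg : 0 ≤ ∫ x, llr q qstar x ∂q :=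
      aux_integral_llr_nonneg (hqp.trans hpq) h_int_qs
    have h_le : ∫ x, llr qstar p x ∂qstar ≤ ∫ x, llr q p x ∂q := by
      rw [h_val_star]
      linarith
    unfold KL
    simp only [← llr_def]
    exact le_of_eq_of_le (if_pos h_int_star)
      ((ENNReal.ofReal_le_ofReal h_le).trans_eq (if_pos h_int_q).symm)
  · unfold KL
    simp only [← llr_def]
    exact le_top.trans_eq (if_neg h_int_q).symm
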